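/- For any two policies π and π̃ of the fixed finite discounted MDP, |J_R(π) − J_R(π̃)| ≤ (3 R_max/(1−γ)²) D^max_TV(π, π̃), where R_max = max_{s,a} |R(s,a)|. -/

import Mathlib

open Finset

/-- Time-`t` state distribution of policy `π` in the MDP with transitions `P`
and initial distribution `μ`. -/
noncomputable def pDist {S A : Type*} [Fintype S] [Fintype A]
    (P : S → A → S → ℝ) (μ : S → ℝ) (π : S → A → ℝ) : ℕ → S → ℝ
  | 0 => μ
  | t + 1 => fun s' => ∑ s, ∑ a, pDist P μ π t s * π s a * P s a s'

/-- Discounted state visitation distribution `d^π`. -/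
noncomputable def dvisit {S A : Type*} [Fintype S] [Fintype A]
    (P : S → A → S → ℝ) (μ : S → ℝ) (γ : ℝ) (π : S → A → ℝ) (s : S) : ℝ :=
  (1 - γ) * ∑' t : ℕ, γ ^ t * pDist P μ π t s

/-- Discounted return `J_R(π)`. -/
noncomputable def Jret {S A : Type*} [Fintype S] [Fintype A]
    (P : S → A → S → ℝ) (μ : S → ℝ) (γ : ℝ) (R : S → A → ℝ) (π : S → A → ℝ) : ℝ :=
  ∑' t : ℕ, γ ^ t * ∑ s, ∑ a, pDist P μ π t s * π s a * R s a

/-- Advantage function `A_R^π(s,a) = Q_R^π(s,a) - V_R^π(s)`, expressed in terms of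
the value function `V` of the policy. -/
noncomputable def Adv {S A : Type*} [Fintype S]
    (P : S → A → S → ℝ) (γ : ℝ) (R : S → A → ℝ) (V : S → ℝ) (s : S) (a : A) : ℝ :=
  (R s a + γ * ∑ s', P s a s' * V s') - V s

/-- KL divergence between two distributions on a finite type. -/
noncomputable def KL {X : Type*} [Fintype X] (p q : X → ℝ) : ℝ :=
  ∑ x, p x * Real.log (p x / q x)

/-- Total variation distance between two distributions on a finite type. -/
noncomputable def TV {X : Type*} [Fintype X] (p q : X → ℝ) : ℝ :=
  (1 / 2) * ∑ x, |p x - q x|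

section aux
variable {S A : Type*} [Fintype S] [Fintype A]

lemma pDist_nonneg (P : S → A → S → ℝ) (μ : S → ℝ) (π : S → A → ℝ)
    (hP0 : ∀ s a s', 0 ≤ P s a s') (hμ0 : ∀ s, 0 ≤ μ s) (hπ0 : ∀ s a, 0 ≤ π s a) :
    ∀ t s, 0 ≤ pDist P μ π t s
  | 0, s => hμ0 s
  | t+1, s' => Finset.sum_nonneg fun s _ => Finset.sum_nonneg fun a _ =>
      mul_nonneg (mul_nonneg (pDist_nonneg P μ π hP0 hμ0 hπ0 t s) (hπ0 s a)) (hP0 s a s')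

lemma pDist_sum_one (P : S → A → S → ℝ) (μ : S → ℝ) (π : S → A → ℝ)
    (hP1 : ∀ s a, ∑ s', P s a s' = 1) (hμ1 : ∑ s, μ s = 1) (hπ1 : ∀ s, ∑ a, π s a = 1) :
    ∀ t, ∑ s, pDist P μ π t s = 1
  | 0 => hμ1
  | t+1 => by
      have ih := pDist_sum_one P μ π hP1 hμ1 hπ1 t
      show ∑ s', ∑ s, ∑ a, pDist P μ π t s * π s a * P s a s' = 1
      rw [Finset.sum_comm]
      calc ∑ s, ∑ s', ∑ a, pDist P μ π t s * π s a * P s a s'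
          = ∑ s, ∑ a, ∑ s', pDist P μ π t s * π s a * P s a s' := by
            exact Finset.sum_congr rfl fun s _ => Finset.sum_comm
        _ = ∑ s, ∑ a, pDist P μ π t s * π s a := by
            refine Finset.sum_congr rfl fun s _ => Finset.sum_congr rfl fun a _ => ?_
            rw [← Finset.mul_sum, hP1, mul_one]
        _ = ∑ s, pDist P μ π t s := by
            refine Finset.sum_congr rfl fun s _ => ?_
            rw [← Finset.mul_sum, hπ1, mul_one]
        _ = 1 := ih

end aux

set_option maxHeartbeats 1000000 in
/-- For any two policies `π` and `π̃`,
`|J_R(π) − J_R(π̃)| ≤ (3 R_max/(1−γ)²) D^max_TV(π, π̃)` where `R_max = max_{s,a} |R(s,a)|`. -/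
theorem stmt_8 {S A : Type*} [Fintype S] [Fintype A] [Nonempty S] [Nonempty A]
    (R : S → A → ℝ) (P : S → A → S → ℝ)
    (hP0 : ∀ s a s', 0 ≤ P s a s') (hP1 : ∀ s a, ∑ s', P s a s' = 1)
    (γ : ℝ) (hγ0 : 0 < γ) (hγ1 : γ < 1)
    (μ : S → ℝ) (hμ0 : ∀ s, 0 ≤ μ s) (hμ1 : ∑ s, μ s = 1)
    (π πt : S → A → ℝ)
    (hπ0 : ∀ s a, 0 ≤ π s a) (hπ1 : ∀ s, ∑ a, π s a = 1)
    (hπt0 : ∀ s a, 0 ≤ πt s a) (hπt1 : ∀ s, ∑ a, πt s a = 1) :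
    |Jret P μ γ R π - Jret P μ γ R πt| ≤
      (3 * (⨆ s, ⨆ a, |R s a|) / (1 - γ) ^ 2) * (⨆ s, TV (π s) (πt s)) := by
  set Rm : ℝ := ⨆ s, ⨆ a, |R s a| with hRmdef
  set ε : ℝ := ⨆ s, TV (π s) (πt s) with hεdef
  set p : ℕ → S → ℝ := pDist P μ π with hp
  set q : ℕ → S → ℝ := pDist P μ πt with hq
  have hd : (0:ℝ) < 1 - γ := by linarith
  have hRm : ∀ s a, |R s a| ≤ Rm := by
    intro s a
    have h1 : |R s a| ≤ ⨆ a, |R s a| :=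
      le_ciSup (Set.Finite.bddAbove (Set.finite_range fun a => |R s a|)) a
    have h2 : (⨆ a, |R s a|) ≤ Rm :=
      le_ciSup (Set.Finite.bddAbove (Set.finite_range fun s => ⨆ a, |R s a|)) s
    exact h1.trans h2
  have hRm0 : 0 ≤ Rm :=
    le_trans (abs_nonneg _) (hRm (Classical.arbitrary S) (Classical.arbitrary A))
  have hTVle : ∀ s, TV (π s) (πt s) ≤ ε := by
    intro s
    rw [hεdef]
    exact le_ciSup (Set.Finite.bddAbove (Set.finite_range fun s => TV (π s) (πt s))) s
  have hTV0 : ∀ s, 0 ≤ TV (π s) (πt s) := by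
    intro s
    exact mul_nonneg (by norm_num) (Finset.sum_nonneg fun a _ => abs_nonneg _)
  have hε0 : 0 ≤ ε := le_trans (hTV0 (Classical.arbitrary S)) (hTVle _)
  have hp0 : ∀ t s, 0 ≤ p t s := pDist_nonneg P μ π hP0 hμ0 hπ0
  have hq0 : ∀ t s, 0 ≤ q t s := pDist_nonneg P μ πt hP0 hμ0 hπt0
  have hp1 : ∀ t, ∑ s, p t s = 1 := pDist_sum_one P μ π hP1 hμ1 hπ1
  have hq1 : ∀ t, ∑ s, q t s = 1 := pDist_sum_one P μ πt hP1 hμ1 hπt1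
  -- joint L1 bound
  have hjoint : ∀ t, ∑ s, ∑ a, |p t s * π s a - q t s * πt s a|
      ≤ (∑ s, |p t s - q t s|) + 2 * ε := by
    intro t
    have step : ∀ s, ∑ a, |p t s * π s a - q t s * πt s a|
        ≤ |p t s - q t s| + q t s * (2 * ε) := by
      intro s
      calc ∑ a, |p t s * π s a - q t s * πt s a|
          ≤ ∑ a, (|p t s - q t s| * π s a + q t s * |π s a - πt s a|) := by
            refine Finset.sum_le_sum fun a _ => ?_
            have h : p t s * π s a - q t s * πt s a
                = (p t s - q t s) * π s a + q t s * (π s a - πt s a) := by ring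
            rw [h]
            refine (abs_add_le _ _).trans (le_of_eq ?_)
            rw [abs_mul, abs_mul, abs_of_nonneg (hπ0 s a), abs_of_nonneg (hq0 t s)]
        _ = |p t s - q t s| + q t s * ∑ a, |π s a - πt s a| := by
            rw [Finset.sum_add_distrib, ← Finset.mul_sum, hπ1 s, mul_one, ← Finset.mul_sum]
        _ ≤ |p t s - q t s| + q t s * (2 * ε) := by
            have h2 : ∑ a, |π s a - πt s a| = 2 * TV (π s) (πt s) := by
              rw [TV]; ring
            rw [h2]
            have := hTVle s
            nlinarith [hq0 t s]
    calc ∑ s, ∑ a, |p t s * π s a - q t s * πt s a|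
        ≤ ∑ s, (|p t s - q t s| + q t s * (2 * ε)) := Finset.sum_le_sum fun s _ => step s
      _ = (∑ s, |p t s - q t s|) + (∑ s, q t s) * (2 * ε) := by
          rw [Finset.sum_add_distrib, ← Finset.sum_mul]
      _ = (∑ s, |p t s - q t s|) + 2 * ε := by rw [hq1 t, one_mul]
  -- L1 distance between state distributions
  have hD : ∀ t, ∑ s, |p t s - q t s| ≤ 2 * t * ε := by
    intro t
    induction t with
    | zero => simp [hp, hq, pDist]
    | succ t ih =>
      have h1 : ∑ s', |p (t+1) s' - q (t+1) s'|
          ≤ ∑ s, ∑ a, |p t s * π s a - q t s * πt s a| := by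
        have expand : ∀ s', p (t+1) s' - q (t+1) s'
            = ∑ s, ∑ a, (p t s * π s a - q t s * πt s a) * P s a s' := by
          intro s'
          show (∑ s, ∑ a, p t s * π s a * P s a s')
              - (∑ s, ∑ a, q t s * πt s a * P s a s') = _
          rw [← Finset.sum_sub_distrib]
          refine Finset.sum_congr rfl fun s _ => ?_
          rw [← Finset.sum_sub_distrib]
          exact Finset.sum_congr rfl fun a _ => by ring
        calc ∑ s', |p (t+1) s' - q (t+1) s'|
            ≤ ∑ s', ∑ s, ∑ a, |p t s * π s a - q t s * πt s a| * P s a s' := by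
              refine Finset.sum_le_sum fun s' _ => ?_
              rw [expand s']
              refine (Finset.abs_sum_le_sum_abs _ _).trans ?_
              refine Finset.sum_le_sum fun s _ => ?_
              refine (Finset.abs_sum_le_sum_abs _ _).trans ?_
              refine Finset.sum_le_sum fun a _ => ?_
              rw [abs_mul, abs_of_nonneg (hP0 s a s')]
          _ = ∑ s, ∑ a, ∑ s', |p t s * π s a - q t s * πt s a| * P s a s' := by
              rw [Finset.sum_comm]
              exact Finset.sum_congr rfl fun s _ => Finset.sum_comm
          _ = ∑ s, ∑ a, |p t s * π s a - q t s * πt s a| := by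
              refine Finset.sum_congr rfl fun s _ => Finset.sum_congr rfl fun a _ => ?_
              rw [← Finset.mul_sum, hP1, mul_one]
      have h2 := hjoint t
      have h3 : (2:ℝ) * ((t:ℝ)+1) * ε = 2 * (t:ℝ) * ε + 2 * ε := by ring
      push_cast
      linarith
  -- per-step reward difference
  have hr : ∀ t, |(∑ s, ∑ a, p t s * π s a * R s a) - (∑ s, ∑ a, q t s * πt s a * R s a)|
      ≤ Rm * (2 * t * ε + 2 * ε) := by
    intro t
    calc |(∑ s, ∑ a, p t s * π s a * R s a) - (∑ s, ∑ a, q t s * πt s a * R s a)|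
        = |∑ s, ∑ a, (p t s * π s a - q t s * πt s a) * R s a| := by
          rw [← Finset.sum_sub_distrib]
          congr 1
          refine Finset.sum_congr rfl fun s _ => ?_
          rw [← Finset.sum_sub_distrib]
          exact Finset.sum_congr rfl fun a _ => by ring
      _ ≤ ∑ s, ∑ a, |p t s * π s a - q t s * πt s a| * Rm := by
          refine (Finset.abs_sum_le_sum_abs _ _).trans (Finset.sum_le_sum fun s _ => ?_)
          refine (Finset.abs_sum_le_sum_abs _ _).trans (Finset.sum_le_sum fun a _ => ?_)
          rw [abs_mul]
          exact mul_le_mul_of_nonneg_left (hRm s a) (abs_nonneg _)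
      _ = (∑ s, ∑ a, |p t s * π s a - q t s * πt s a|) * Rm := by
          rw [Finset.sum_mul]
          exact Finset.sum_congr rfl fun s _ => (Finset.sum_mul _ _ _).symm
      _ ≤ (2 * t * ε + 2 * ε) * Rm := by
          refine mul_le_mul_of_nonneg_right ((hjoint t).trans ?_) hRm0
          linarith [hD t]
      _ = Rm * (2 * t * ε + 2 * ε) := mul_comm _ _
  -- boundedness of per-step rewards
  have hbound : ∀ (p' : S → ℝ) (π' : S → A → ℝ), (∀ s, 0 ≤ p' s) → (∀ s a, 0 ≤ π' s a) →
      (∑ s, p' s = 1) → (∀ s, ∑ a, π' s a = 1) →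
      |∑ s, ∑ a, p' s * π' s a * R s a| ≤ Rm := by
    intro p' π' h1 h2 h3 h4
    calc |∑ s, ∑ a, p' s * π' s a * R s a| ≤ ∑ s, ∑ a, p' s * π' s a * Rm := by
          refine (Finset.abs_sum_le_sum_abs _ _).trans (Finset.sum_le_sum fun s _ => ?_)
          refine (Finset.abs_sum_le_sum_abs _ _).trans (Finset.sum_le_sum fun a _ => ?_)
          rw [abs_mul, abs_of_nonneg (mul_nonneg (h1 s) (h2 s a))]
          exact mul_le_mul_of_nonneg_left (hRm s a) (mul_nonneg (h1 s) (h2 s a))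
      _ = ∑ s, p' s * Rm := by
          refine Finset.sum_congr rfl fun s _ => ?_
          calc ∑ a, p' s * π' s a * Rm = (∑ a, p' s * π' s a) * Rm := (Finset.sum_mul _ _ _).symm
            _ = p' s * Rm := by rw [← Finset.mul_sum, h4, mul_one]
      _ = Rm := by rw [← Finset.sum_mul, h3, one_mul]
  set f : ℕ → ℝ := fun t => γ ^ t * ∑ s, ∑ a, p t s * π s a * R s a with hf
  set g : ℕ → ℝ := fun t => γ ^ t * ∑ s, ∑ a, q t s * πt s a * R s a with hg
  have hγt : ∀ t : ℕ, (0:ℝ) ≤ γ ^ t := fun t => pow_nonneg hγ0.le t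
  have hgeo : Summable (fun t : ℕ => γ ^ t) := summable_geometric_of_lt_one hγ0.le hγ1
  have hnγ : ‖γ‖ < 1 := by rw [Real.norm_eq_abs, abs_of_pos hγ0]; exact hγ1
  have htγ : Summable (fun t : ℕ => (t:ℝ) * γ ^ t) :=
    (hasSum_coe_mul_geometric_of_norm_lt_one hnγ).summable
  have hsf : Summable f := by
    refine Summable.of_norm_bounded (hgeo.mul_left Rm) fun t => ?_
    rw [Real.norm_eq_abs, hf]
    simp only
    rw [abs_mul, abs_of_nonneg (hγt t), mul_comm]
    exact mul_le_mul_of_nonneg_right (hbound (p t) π (hp0 t) hπ0 (hp1 t) hπ1) (hγt t)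
  have hsg : Summable g := by
    refine Summable.of_norm_bounded (hgeo.mul_left Rm) fun t => ?_
    rw [Real.norm_eq_abs, hg]
    simp only
    rw [abs_mul, abs_of_nonneg (hγt t), mul_comm]
    exact mul_le_mul_of_nonneg_right (hbound (q t) πt (hq0 t) hπt0 (hq1 t) hπt1) (hγt t)
  have hJ : Jret P μ γ R π - Jret P μ γ R πt = ∑' t, (f t - g t) := by
    rw [Summable.tsum_sub hsf hsg]; rfl
  set B : ℕ → ℝ := fun t => (2*Rm*ε) * ((t:ℝ) * γ ^ t) + (2*Rm*ε) * γ ^ t with hB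
  have hsB : Summable B := (htγ.mul_left _).add (hgeo.mul_left _)
  have hfgB : ∀ t, |f t - g t| ≤ B t := by
    intro t
    have : f t - g t = γ ^ t * ((∑ s, ∑ a, p t s * π s a * R s a)
        - (∑ s, ∑ a, q t s * πt s a * R s a)) := by rw [hf, hg]; ring
    rw [this, abs_mul, abs_of_nonneg (hγt t)]
    calc γ ^ t * |(∑ s, ∑ a, p t s * π s a * R s a) - (∑ s, ∑ a, q t s * πt s a * R s a)|
        ≤ γ ^ t * (Rm * (2 * t * ε + 2 * ε)) :=
          mul_le_mul_of_nonneg_left (hr t) (hγt t)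
      _ = B t := by rw [hB]; push_cast; ring
  have hsfg : Summable (fun t => |f t - g t|) :=
    Summable.of_nonneg_of_le (fun t => abs_nonneg _) hfgB hsB
  have habs : |∑' t, (f t - g t)| ≤ ∑' t, B t := by
    have h1 : ‖∑' t, (f t - g t)‖ ≤ ∑' t, ‖f t - g t‖ :=
      norm_tsum_le_tsum_norm (by simpa only [Real.norm_eq_abs] using hsfg)
    rw [Real.norm_eq_abs] at h1
    refine h1.trans ?_
    refine Summable.tsum_le_tsum (fun t => ?_) (by simpa only [Real.norm_eq_abs] using hsfg) hsB
    rw [Real.norm_eq_abs]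
    exact hfgB t
  have htsumB : ∑' t, B t = 2 * Rm * ε / (1 - γ) ^ 2 := by
    rw [hB, Summable.tsum_add (htγ.mul_left _) (hgeo.mul_left _), tsum_mul_left, tsum_mul_left,
      tsum_coe_mul_geometric_of_norm_lt_one hnγ, tsum_geometric_of_lt_one hγ0.le hγ1]
    field_simp
    ring
  rw [hJ]
  refine habs.trans ?_
  rw [htsumB]
  have hfin : 2 * Rm * ε / (1 - γ) ^ 2 ≤ 3 * Rm * ε / (1 - γ) ^ 2 := by
    refine div_le_div_of_nonneg_right ?_ (by positivity)
    nlinarith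
  refine hfin.trans (le_of_eq ?_)
  ring
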